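/- For the generalized double Pareto mixing density π(λ²) = (β^α / (2Γ(α))) ∫_0^∞ e^{-(γ²λ²/2 + βγ)} γ^{α+1} dγ (with α, β > 0), one can write π(λ²) = K (λ²)^{-α/2 - 1} L(λ²) where K = β^α/Γ(α) and L(t) = 2^{α/2 - 1} ∫_0^∞ e^{-β√(2u/t)} e^{-u} u^{α/2} du, and L satisfies lim_{t→∞} L(t) = 2^{α/2 - 1} Γ(α/2 + 1) > 0; in particular, L is slowly varying on (0,∞) and sup_{t>0} L(t) = 2^{α/2 - 1} Γ(α/2 + 1). -/

import Mathlib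

open MeasureTheory Filter Set Topology

/-- The slowly varying part of the generalized double Pareto mixing density. -/
noncomputable def gdpL (α β t : ℝ) : ℝ :=
  (2:ℝ) ^ (α / 2 - 1) *
    ∫ u in Set.Ioi (0:ℝ),
      Real.exp (-(β * Real.sqrt (2 * u / t))) * Real.exp (-u) * u ^ (α / 2)

/-- The generalized double Pareto mixing density for `λ²`. -/
noncomputable def gdpMixing (α β t : ℝ) : ℝ :=
  (β ^ α / (2 * Real.Gamma α)) *
    ∫ γ in Set.Ioi (0:ℝ), Real.exp (-(γ ^ 2 * t / 2 + β * γ)) * γ ^ (α + 1)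

lemma gdp_cov (α β t : ℝ) (ht : 0 < t) :
    (∫ u in Ioi (0:ℝ), Real.exp (-(β * Real.sqrt (2*u/t))) * Real.exp (-u) * u ^ (α/2))
    = t * (t/2) ^ (α/2) * ∫ γ in Ioi (0:ℝ),
        Real.exp (-(γ^2*t/2 + β*γ)) * γ^(α+1) := by
  set g : ℝ → ℝ := fun u => Real.exp (-(β * Real.sqrt (2*u/t))) * Real.exp (-u) * u ^ (α/2)
    with hg
  have hc : 0 < t/2 := by positivity
  have h1 : (∫ x in Ioi (0:ℝ), g (t/2 * x)) = (t/2)⁻¹ • ∫ x in Ioi (t/2*0), g x :=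
    integral_comp_mul_left_Ioi g 0 hc
  rw [mul_zero] at h1
  have h2 : (∫ x in Ioi (0:ℝ), ((2:ℝ) * x ^ ((2:ℝ)-1)) • g (t/2 * x ^ (2:ℝ)))
      = ∫ v in Ioi (0:ℝ), g (t/2 * v) :=
    integral_comp_rpow_Ioi_of_pos (g := fun v => g (t/2*v)) (p := 2) two_pos
  have h3 : (∫ x in Ioi (0:ℝ), ((2:ℝ) * x ^ ((2:ℝ)-1)) • g (t/2 * x ^ (2:ℝ)))
      = ∫ x in Ioi (0:ℝ),
          (2 * (t/2) ^ (α/2)) * (Real.exp (-(x^2*t/2 + β*x)) * x^(α+1)) := by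
    refine setIntegral_congr_fun measurableSet_Ioi (fun x hx => ?_)
    have hx : (0:ℝ) < x := hx
    have hx2 : x ^ (2:ℝ) = x * x := by
      rw [show (2:ℝ) = ((2:ℕ):ℝ) by norm_num, Real.rpow_natCast]; ring
    have hsqrt : Real.sqrt (2 * (t/2 * (x * x)) / t) = x := by
      have h : 2 * (t/2 * (x * x)) / t = x * x := by
        field_simp
      rw [h, Real.sqrt_mul_self hx.le]
    have hxx : (x * x) ^ (α/2) = x ^ α := by
      rw [← hx2, ← Real.rpow_mul hx.le]
      congr 1; ring
    have hmul : (t/2 * (x * x)) ^ (α/2) = (t/2) ^ (α/2) * x ^ α := by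
      rw [Real.mul_rpow hc.le (mul_self_nonneg x), hxx]
    have hx1 : x ^ (α + 1) = x ^ α * x := Real.rpow_add_one hx.ne' α
    rw [hx2, hg]
    simp only [smul_eq_mul]
    rw [hsqrt, hmul, hx1, show (2:ℝ) - 1 = 1 by norm_num, Real.rpow_one,
      show -(x^2*t/2 + β*x) = -(x^2*t/2) + -(β*x) by ring, Real.exp_add]
    ring_nf
  have h4 : (∫ u in Ioi (0:ℝ), g u) = (t/2) * ∫ x in Ioi (0:ℝ), g (t/2 * x) := by
    rw [h1, smul_eq_mul]
    field_simp
  rw [h4, ← h2, h3, integral_const_mul]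
  ring

/-- The generalized double Pareto mixing density can be written as
`K t^{-α/2-1} L(t)` with `K = β^α/Γ(α)` and
`L(t) = 2^{α/2-1} ∫_0^∞ e^{-β√(2u/t)} e^{-u} u^{α/2} du`; moreover
`L(t) → 2^{α/2-1} Γ(α/2+1) > 0` as `t → ∞`, `L` is slowly varying,
and `sup_{t>0} L(t) = 2^{α/2-1} Γ(α/2+1)`. -/
theorem gdp_in_general_class (α β : ℝ) (hα : 0 < α) (hβ : 0 < β) :
    (∀ t > 0,
        gdpMixing α β t =
          (β ^ α / Real.Gamma α) * t ^ (-α / 2 - 1) * gdpL α β t) ∧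
      Tendsto (fun t => gdpL α β t) atTop
        (𝓝 ((2:ℝ) ^ (α / 2 - 1) * Real.Gamma (α / 2 + 1))) ∧
      0 < (2:ℝ) ^ (α / 2 - 1) * Real.Gamma (α / 2 + 1) ∧
      (∀ c > 0, Tendsto (fun t => gdpL α β (c * t) / gdpL α β t) atTop (𝓝 1)) ∧
      (⨆ t : {t : ℝ // 0 < t}, gdpL α β t) =
        (2:ℝ) ^ (α / 2 - 1) * Real.Gamma (α / 2 + 1) := by
  have hΓpos : 0 < Real.Gamma (α / 2 + 1) := Real.Gamma_pos_of_pos (by positivity)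
  set L : ℝ := (2:ℝ) ^ (α / 2 - 1) * Real.Gamma (α / 2 + 1) with hL
  have hLpos : 0 < L := by positivity
  -- the integrand and the dominating function
  set F : ℝ → ℝ → ℝ := fun t u =>
    Real.exp (-(β * Real.sqrt (2 * u / t))) * Real.exp (-u) * u ^ (α / 2) with hF
  set G : ℝ → ℝ := fun u => Real.exp (-u) * u ^ (α / 2) with hG
  have hG_int : IntegrableOn G (Ioi 0) := by
    have := Real.GammaIntegral_convergent (s := α / 2 + 1) (by positivity)
    simpa [hG] using this
  have hG_eq : (∫ u in Ioi (0:ℝ), G u) = Real.Gamma (α / 2 + 1) := by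
    rw [Real.Gamma_eq_integral (by positivity : (0:ℝ) < α / 2 + 1)]
    simp [hG]
  have hF_meas : ∀ t : ℝ, AEStronglyMeasurable (F t) (volume.restrict (Ioi 0)) := by
    intro t
    apply Measurable.aestronglyMeasurable
    fun_prop
  have hF_nonneg : ∀ t u : ℝ, 0 < u → 0 ≤ F t u := by
    intro t u hu
    positivity
  have hF_le : ∀ t : ℝ, ∀ u ∈ Ioi (0:ℝ), F t u ≤ G u := by
    intro t u hu
    have h1 : Real.exp (-(β * Real.sqrt (2 * u / t))) ≤ 1 := by
      rw [Real.exp_le_one_iff]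
      have : 0 ≤ β * Real.sqrt (2 * u / t) := by positivity
      linarith
    have h2 : 0 ≤ Real.exp (-u) * u ^ (α / 2) := by
      have hu' : (0:ℝ) < u := hu
      positivity
    calc F t u = Real.exp (-(β * Real.sqrt (2 * u / t))) * (Real.exp (-u) * u ^ (α / 2)) := by
          rw [hF]; ring
      _ ≤ 1 * (Real.exp (-u) * u ^ (α / 2)) := mul_le_mul_of_nonneg_right h1 h2
      _ = G u := by rw [one_mul]
  have hF_int : ∀ t : ℝ, IntegrableOn (F t) (Ioi 0) := by
    intro t
    refine hG_int.mono' (hF_meas t) ?_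
    filter_upwards [ae_restrict_mem measurableSet_Ioi] with u hu
    rw [Real.norm_eq_abs, abs_of_nonneg (hF_nonneg t u hu)]
    exact hF_le t u hu
  -- Part 2 : the limit
  have htend : Tendsto (fun t => gdpL α β t) atTop (𝓝 L) := by
    have hI : Tendsto (fun t => ∫ u in Ioi (0:ℝ), F t u) atTop
        (𝓝 (∫ u in Ioi (0:ℝ), G u)) := by
      refine tendsto_integral_filter_of_dominated_convergence G
        (Eventually.of_forall hF_meas) ?_ hG_int ?_
      · filter_upwards with t
        filter_upwards [ae_restrict_mem measurableSet_Ioi] with u hu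
        rw [Real.norm_eq_abs, abs_of_nonneg (hF_nonneg t u hu)]
        exact hF_le t u hu
      · filter_upwards [ae_restrict_mem measurableSet_Ioi] with u hu
        have h0 : Tendsto (fun t : ℝ => 2 * u / t) atTop (𝓝 0) := by
          have := tendsto_inv_atTop_zero (𝕜 := ℝ)
          have h := this.const_mul (2 * u)
          simpa [div_eq_mul_inv] using h
        have h1 : Tendsto (fun t : ℝ => Real.exp (-(β * Real.sqrt (2 * u / t))))
            atTop (𝓝 1) := by
          have hs : Tendsto (fun t : ℝ => Real.sqrt (2 * u / t)) atTop (𝓝 0) := by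
            have := (Real.continuous_sqrt.tendsto 0).comp h0
            simpa [Function.comp_def] using this
          have hn : Tendsto (fun t : ℝ => -(β * Real.sqrt (2 * u / t))) atTop (𝓝 0) := by
            simpa using (hs.const_mul β).neg
          have := (Real.continuous_exp.tendsto 0).comp hn
          simpa [Function.comp_def] using this
        have := (h1.mul_const (Real.exp (-u))).mul_const (u ^ (α / 2))
        simpa [hF, hG, mul_assoc] using this
    have := hI.const_mul ((2:ℝ) ^ (α / 2 - 1))
    rw [hG_eq] at this
    simpa [gdpL, hL, hF] using this
  have hL_ne : L ≠ 0 := ne_of_gt hLpos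
  refine ⟨?_, by simpa [hL] using htend, by simpa [hL] using hLpos, ?_, ?_⟩
  · -- Part 1 : the representation
    intro t ht
    have hcov := gdp_cov α β t ht
    rw [gdpMixing, gdpL]
    rw [show (∫ u in Set.Ioi (0:ℝ),
        Real.exp (-(β * Real.sqrt (2 * u / t))) * Real.exp (-u) * u ^ (α / 2)) =
        t * (t/2) ^ (α/2) * ∫ γ in Ioi (0:ℝ),
          Real.exp (-(γ^2*t/2 + β*γ)) * γ^(α+1) from hcov]
    have hdiv : (t/2) ^ (α/2) = t ^ (α/2) * (2:ℝ) ^ (-(α/2)) := by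
      rw [div_eq_mul_inv, Real.mul_rpow ht.le (by norm_num : (0:ℝ) ≤ 2⁻¹),
        Real.inv_rpow (by norm_num : (0:ℝ) ≤ 2), ← Real.rpow_neg (by norm_num : (0:ℝ) ≤ 2)]
    have hT : t ^ (-α/2-1) * t * t ^ (α/2) = 1 := by
      nth_rewrite 2 [← Real.rpow_one t]
      rw [← Real.rpow_add ht, ← Real.rpow_add ht,
        show -α/2-1+1+α/2 = 0 by ring, Real.rpow_zero]
    have h2 : (2:ℝ) ^ (α/2-1) * (2:ℝ) ^ (-(α/2)) = 1/2 := by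
      rw [← Real.rpow_add (by norm_num : (0:ℝ) < 2),
        show α/2-1 + -(α/2) = -1 by ring, Real.rpow_neg_one]
      norm_num
    rw [hdiv]
    set I : ℝ := ∫ γ in Ioi (0:ℝ), Real.exp (-(γ^2*t/2 + β*γ)) * γ^(α+1) with hI
    have : β ^ α / Real.Gamma α * t ^ (-α/2-1) *
        ((2:ℝ) ^ (α/2-1) * (t * (t ^ (α/2) * (2:ℝ) ^ (-(α/2))) * I)) =
        β ^ α / Real.Gamma α *
          ((t ^ (-α/2-1) * t * t ^ (α/2)) * ((2:ℝ) ^ (α/2-1) * (2:ℝ) ^ (-(α/2)))) * I := by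
      ring
    rw [this, hT, h2]
    ring
  · -- Part 4 : slow variation
    intro c hc
    have hct : Tendsto (fun t : ℝ => c * t) atTop atTop :=
      Tendsto.const_mul_atTop hc tendsto_id
    have h1 : Tendsto (fun t => gdpL α β (c * t)) atTop (𝓝 L) := htend.comp hct
    have := h1.div htend hL_ne
    simpa [div_self hL_ne, Pi.div_def] using this
  · -- Part 5 : the supremum
    haveI : Nonempty {t : ℝ // 0 < t} := ⟨⟨1, one_pos⟩⟩
    have upper : ∀ t : {t : ℝ // 0 < t}, gdpL α β t ≤ L := by
      rintro ⟨t, ht⟩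
      have hmono : (∫ u in Ioi (0:ℝ), F t u) ≤ ∫ u in Ioi (0:ℝ), G u :=
        setIntegral_mono_on (hF_int t) hG_int measurableSet_Ioi (hF_le t)
      have : (2:ℝ) ^ (α / 2 - 1) * (∫ u in Ioi (0:ℝ), F t u) ≤
          (2:ℝ) ^ (α / 2 - 1) * ∫ u in Ioi (0:ℝ), G u :=
        mul_le_mul_of_nonneg_left hmono (by positivity)
      rw [hG_eq] at this
      simpa [gdpL, hF, hL] using this
    have hbdd : BddAbove (Set.range fun t : {t : ℝ // 0 < t} => gdpL α β t) := by
      refine ⟨L, ?_⟩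
      rintro x ⟨t, rfl⟩
      exact upper t
    refine le_antisymm (ciSup_le upper) ?_
    refine le_of_tendsto htend ?_
    filter_upwards [eventually_gt_atTop (0:ℝ)] with t ht
    exact le_ciSup hbdd ⟨t, ht⟩
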